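/- Let G ≤ Aut(T) be a closed subgroup. Then the fixed-point process {X_n} of G is a martingale if and only if for every n ≥ 1 the level stabilizer St_G(n) acts level-transitively on the subtrees rooted at level n. -/

import Mathlib

open MeasureTheory

namespace ArbGal

/-- Vertices of the `d`-regular rooted tree: the free monoid on `{0, …, d-1}`. -/
abbrev V (d : ℕ) := List (Fin d)

instance (d : ℕ) : TopologicalSpace (V d) := ⊥

/-- A permutation of the vertices is an automorphism of the rooted tree iff it
preserves the level of vertices and the prefix (ancestor) relation. -/
def IsTreeAut {d : ℕ} (g : Equiv.Perm (V d)) : Prop :=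
  (∀ v : V d, (g v).length = v.length) ∧ ∀ u v : V d, u <+: v → g u <+: g v

/-- The automorphism group `Aut(T)` of the `d`-regular rooted tree, realized as a
subgroup of the permutation group of the set of vertices. -/
def treeAutGroup (d : ℕ) : Subgroup (Equiv.Perm (V d)) where
  carrier := {g | IsTreeAut g}
  one_mem' := ⟨fun _ => rfl, fun _ _ h => h⟩
  mul_mem' := by
    rintro a b ⟨ha1, ha2⟩ ⟨hb1, hb2⟩
    refine ⟨fun v => ?_, fun u v h => ?_⟩
    · simp only [Equiv.Perm.mul_apply, ha1, hb1]
    · simpa only [Equiv.Perm.mul_apply] using ha2 _ _ (hb2 _ _ h)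
  inv_mem' := by
    rintro g ⟨h1, h2⟩
    have hlen : ∀ v : V _, (g⁻¹ v).length = v.length := by
      intro v
      have := h1 (g⁻¹ v)
      rw [Equiv.Perm.eq_inv_iff_eq.mp rfl] at this
      exact this.symm
    refine ⟨hlen, fun u v huv => ?_⟩
    have h3 : (g⁻¹ v).take (g⁻¹ u).length <+: g⁻¹ v := List.take_prefix _ _
    have h4 : g ((g⁻¹ v).take (g⁻¹ u).length) <+: g (g⁻¹ v) := h2 _ _ h3
    rw [Equiv.Perm.eq_inv_iff_eq.mp rfl] at h4
    have hlen4 : (g ((g⁻¹ v).take (g⁻¹ u).length)).length = u.length := by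
      rw [h1, List.length_take, hlen, hlen]
      exact min_eq_left huv.length_le
    have h5 : g ((g⁻¹ v).take (g⁻¹ u).length) = u := by
      rcases List.prefix_or_prefix_of_prefix h4 huv with h | h
      · exact h.eq_of_length hlen4
      · exact (h.eq_of_length hlen4.symm).symm
    have h6 : (g⁻¹ v).take (g⁻¹ u).length = g⁻¹ u := by
      apply g.injective
      rw [h5, Equiv.Perm.eq_inv_iff_eq.mp rfl]
    rw [← h6]
    exact List.take_prefix _ _

/-- The group `Aut(T)`, as a type. -/
abbrev AutT (d : ℕ) := ↥(treeAutGroup d)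

/-- `Aut(T)` carries the congruence topology, i.e. the topology of pointwise
convergence on the (discrete) set of vertices. -/
instance (d : ℕ) : TopologicalSpace (Equiv.Perm (V d)) :=
  TopologicalSpace.induced (fun g => (g : V d → V d)) Pi.topologicalSpace

variable {d : ℕ}

lemma autT_len (g : AutT d) (v : V d) : ((g : Equiv.Perm (V d)) v).length = v.length := g.2.1 v

lemma autT_prefix (g : AutT d) {u v : V d} (h : u <+: v) :
    (g : Equiv.Perm (V d)) u <+: (g : Equiv.Perm (V d)) v := g.2.2 u v h

/-- The underlying function of the section `g|_v`. -/
def secFun (g : AutT d) (v w : V d) : V d := ((g : Equiv.Perm (V d)) (v ++ w)).drop v.length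

lemma sec_spec (g : AutT d) (v w : V d) :
    (g : Equiv.Perm (V d)) (v ++ w) = (g : Equiv.Perm (V d)) v ++ secFun g v w := by
  have h1 : (g : Equiv.Perm (V d)) v <+: (g : Equiv.Perm (V d)) (v ++ w) :=
    autT_prefix g (List.prefix_append v w)
  have h2 := autT_len g v
  have h3 : (g : Equiv.Perm (V d)) v = ((g : Equiv.Perm (V d)) (v ++ w)).take v.length := by
    rw [← h2]; exact List.prefix_iff_eq_take.mp h1
  conv_lhs => rw [← List.take_append_drop v.length ((g : Equiv.Perm (V d)) (v ++ w))]
  rw [← h3]; rfl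

lemma coe_inv (g : AutT d) : ((g⁻¹ : AutT d) : Equiv.Perm (V d)) = (g : Equiv.Perm (V d))⁻¹ := rfl

lemma sec_spec' (g : AutT d) (v w : V d) :
    (g : Equiv.Perm (V d)) (v ++ w)
      = (g : Equiv.Perm (V d)) v ++ List.drop v.length ((g : Equiv.Perm (V d)) (v ++ w)) :=
  sec_spec g v w

/-- The section (state) `g|_v` of a tree automorphism `g` at the vertex `v`; it is
the unique automorphism satisfying `g(v·w) = g(v)·(g|_v)(w)` for all `w`. -/
def sectionAt (g : AutT d) (v : V d) : AutT d :=
  ⟨{ toFun := secFun g v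
     invFun := secFun g⁻¹ ((g : Equiv.Perm (V d)) v)
     left_inv := by
       intro w
       show secFun g⁻¹ ((g : Equiv.Perm (V d)) v) (secFun g v w) = w
       unfold secFun
       rw [coe_inv, ← sec_spec' g v w, (Equiv.Perm.inv_eq_iff_eq.mpr rfl), autT_len, List.drop_left]
     right_inv := by
       intro w
       show secFun g v (secFun g⁻¹ ((g : Equiv.Perm (V d)) v) w) = w
       unfold secFun
       rw [coe_inv]
       have h := sec_spec' g⁻¹ ((g : Equiv.Perm (V d)) v) w
       rw [coe_inv, (Equiv.Perm.inv_eq_iff_eq.mpr rfl)] at h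
       rw [← h, Equiv.Perm.eq_inv_iff_eq.mp rfl, ← autT_len g v, List.drop_left] },
   by
     constructor
     · intro w
       show (secFun g v w).length = w.length
       unfold secFun
       rw [List.length_drop, autT_len, List.length_append]
       omega
     · intro u w huw
       show secFun g v u <+: secFun g v w
       have h1 : v ++ u <+: v ++ w := by
         obtain ⟨c, rfl⟩ := huw
         rw [← List.append_assoc]
         exact List.prefix_append _ _
       have h2 := autT_prefix g h1
       rw [sec_spec g v u, sec_spec g v w] at h2
       obtain ⟨c, hc⟩ := h2
       rw [List.append_assoc] at hc
       exact ⟨c, List.append_cancel_left hc⟩⟩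

/-- The pointwise stabilizer `St(n)` of the `n`-th level, as a subgroup of `Aut(T)`. -/
def levelStab (d n : ℕ) : Subgroup (AutT d) where
  carrier := {g | ∀ v : V d, v.length = n → (g : Equiv.Perm (V d)) v = v}
  one_mem' := fun _ _ => rfl
  mul_mem' := by
    rintro a b ha hb v hv
    show (a : Equiv.Perm (V d)) ((b : Equiv.Perm (V d)) v) = v
    rw [hb v hv, ha v hv]
  inv_mem' := by
    intro g hg v hv
    show (g : Equiv.Perm (V d))⁻¹ v = v
    conv_lhs => rw [← hg v hv]
    exact Equiv.symm_apply_apply _ _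

/-- Two automorphisms agree on the truncated tree `T^m` (have the same image
under `π_m`). -/
def truncEq (d : ℕ) (m : ℕ) (g h : AutT d) : Prop :=
  ∀ w : V d, w.length ≤ m → (g : Equiv.Perm (V d)) w = (h : Equiv.Perm (V d)) w

/-- `St_G(n)_v^m = π_m(G)`: the projection of the `n`-th level stabilizer of `G`
at the vertex `v`, truncated at depth `m`, coincides with `π_m(G)`. -/
def SectModEq (d : ℕ) (G : Subgroup (AutT d)) (n m : ℕ) (v : V d) : Prop :=
  ∀ a : AutT d,
    (∃ g, g ∈ G ∧ g ∈ levelStab d n ∧ (g : Equiv.Perm (V d)) v = v ∧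
        truncEq d m (sectionAt g v) a)
    ↔ (∃ b ∈ G, truncEq d m b a)

/-- `G` is self-similar: all sections of elements of `G` belong to `G`. -/
def SelfSimilar (d : ℕ) (G : Subgroup (AutT d)) : Prop :=
  ∀ g ∈ G, ∀ v : V d, sectionAt g v ∈ G

/-- `G` is level-transitive. -/
def LevelTrans (d : ℕ) (G : Subgroup (AutT d)) : Prop :=
  ∀ v w : V d, v.length = w.length → ∃ g ∈ G, (g : Equiv.Perm (V d)) v = w

/-- `G` is fractal: self-similar, level-transitive, and every projection
`G_v = φ_v(st_G(v))` is all of `G`. -/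
def Fractal (d : ℕ) (G : Subgroup (AutT d)) : Prop :=
  SelfSimilar d G ∧ LevelTrans d G ∧
    ∀ v : V d, ∀ h ∈ G, ∃ g ∈ G, (g : Equiv.Perm (V d)) v = v ∧ sectionAt g v = h

/-- For every `n ≥ 1`, the level stabilizer `St_G(n)` acts level-transitively on the
subtrees rooted at the vertices of level `n`. -/
def StabLevelTrans (d : ℕ) (G : Subgroup (AutT d)) : Prop :=
  ∀ n : ℕ, 1 ≤ n → ∀ v u w : V d, v.length = n → u.length = w.length →
    ∃ g ∈ G ⊓ levelStab d n, (g : Equiv.Perm (V d)) (v ++ u) = v ++ w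

/-- A fractal group `G ≤ Aut(T)` is mixing with delay constant `N`. -/
def MixingWithDelay (d : ℕ) (G : Subgroup (AutT d)) (N : ℕ) : Prop :=
  Fractal d G ∧ StabLevelTrans d G ∧
    ∀ m : ℕ, 1 ≤ m → ∀ n : ℕ, 1 ≤ n → ∀ v : V d, n + N ≤ v.length → SectModEq d G n m v

/-- A fractal group `G ≤ Aut(T)` is mixing: its level stabilizers act
level-transitively below their level, and for all `n, m ≥ 1` there is a delay
`N = N(m)` with `St_G(n)_v^m = π_m(G)` whenever `|v| ≥ n + N`. -/
def Mixing (d : ℕ) (G : Subgroup (AutT d)) : Prop :=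
  Fractal d G ∧ StabLevelTrans d G ∧
    ∀ m : ℕ, 1 ≤ m → ∃ N : ℕ,
      ∀ n : ℕ, 1 ≤ n → ∀ v : V d, n + N ≤ v.length → SectModEq d G n m v

/-- `g` fixes an end of the tree `T`, i.e. an infinite rooted path. -/
def FixesEnd (d : ℕ) (g : AutT d) : Prop :=
  ∃ ω : ℕ → Fin d, ∀ n : ℕ,
    (g : Equiv.Perm (V d)) (List.ofFn (fun i : Fin n => ω i)) = List.ofFn (fun i : Fin n => ω i)

/-- `X_n(g)`: the number of vertices of level `n` fixed by `g`. -/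
noncomputable def Xfix (d n : ℕ) (g : AutT d) : ℕ :=
  Set.ncard {w : Fin n → Fin d |
    (g : Equiv.Perm (V d)) (List.ofFn w) = List.ofFn w}

/-- The Borel σ-algebra on a closed subgroup of `Aut(T)`. -/
instance (d : ℕ) (G : Subgroup (AutT d)) : MeasurableSpace ↥G := borel ↥G

/-- The fixed-point process `{X_n}` of `G`, with respect to the measure `μ` on `G`,
is a martingale. -/
def FPMartingale (d : ℕ) (G : Subgroup (AutT d)) (μ : Measure ↥G) : Prop :=
  (∀ n : ℕ, 1 ≤ n → Integrable (fun g : ↥G => (Xfix d n (g : AutT d) : ℝ)) μ) ∧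
  ∀ n : ℕ, 1 ≤ n → ∀ t : ℕ → ℝ,
    μ {g : ↥G | ∀ i, 1 ≤ i → i ≤ n → (Xfix d i (g : AutT d) : ℝ) = t i} ≠ 0 →
    ∫ g in {g : ↥G | ∀ i, 1 ≤ i → i ≤ n → (Xfix d i (g : AutT d) : ℝ) = t i},
        (Xfix d (n + 1) (g : AutT d) : ℝ) ∂μ
      = t n * (μ {g : ↥G | ∀ i, 1 ≤ i → i ≤ n → (Xfix d i (g : AutT d) : ℝ) = t i}).toReal


/-! ### Auxiliary material for Statement 8 -/

section Aux

/-- Apply an automorphism to a vertex. -/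
abbrev ap (g : AutT d) (v : V d) : V d := (g : Equiv.Perm (V d)) v

lemma mem_levelStab_iff {n : ℕ} {g : AutT d} :
    g ∈ levelStab d n ↔ ∀ v : V d, v.length = n → (g : Equiv.Perm (V d)) v = v := Iff.rfl

lemma ap_mul (g h : AutT d) (v : V d) : ap (g * h) v = ap g (ap h v) := rfl

lemma ap_one (v : V d) : ap (1 : AutT d) v = v := rfl

lemma ap_len (g : AutT d) (v : V d) : (ap g v).length = v.length := autT_len g v

lemma ap_inv_ap (g : AutT d) (v : V d) : ap g⁻¹ (ap g v) = v := by
  show ((g : Equiv.Perm (V d))⁻¹) ((g : Equiv.Perm (V d)) v) = v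
  exact Equiv.symm_apply_apply _ _

lemma ap_ap_inv (g : AutT d) (v : V d) : ap g (ap g⁻¹ v) = v := by
  show (g : Equiv.Perm (V d)) (((g : Equiv.Perm (V d))⁻¹) v) = v
  exact Equiv.apply_symm_apply _ _

lemma ap_injective (g : AutT d) {u v : V d} (h : ap g u = ap g v) : u = v :=
  (g : Equiv.Perm (V d)).injective h

lemma ap_fix_of_prefix {g : AutT d} {u v : V d} (hfix : ap g v = v) (h : u <+: v) :
    ap g u = u := by
  have h1 : ap g u <+: v := by
    have h2 : ap g u <+: ap g v := autT_prefix g h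
    rwa [hfix] at h2
  have h2 := ap_len g u
  rw [List.prefix_iff_eq_take] at h1 h
  rw [h2] at h1
  rw [h1, ← h]

lemma levelStab_fix {n : ℕ} (hd : 0 < d) {g : AutT d} (hg : g ∈ levelStab d n)
    {v : V d} (hv : v.length ≤ n) : ap g v = v := by
  have hlen : (v ++ List.replicate (n - v.length) (⟨0, hd⟩ : Fin d)).length = n := by
    simp only [List.length_append, List.length_replicate]
    omega
  exact ap_fix_of_prefix (mem_levelStab_iff.mp hg _ hlen) (List.prefix_append _ _)

lemma levelStab_mono (hd : 0 < d) {n m : ℕ} (hnm : n ≤ m) {g : AutT d}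
    (hg : g ∈ levelStab d m) : g ∈ levelStab d n := by
  rw [mem_levelStab_iff]
  intro v hv
  exact levelStab_fix hd hg (by omega)

lemma ap_child' {g : AutT d} {a b : V d} (hab : ap g a = b) (i : Fin d) :
    ∃ j : Fin d, ap g (a ++ [i]) = b ++ [j] := by
  have h := sec_spec g a [i]
  have hlen : (secFun g a [i]).length = 1 := by
    have h2 : ((g : Equiv.Perm (V d)) a).length + (secFun g a [i]).length
        = a.length + 1 := by
      rw [← List.length_append, ← h, autT_len]
      simp
    have h3 := autT_len g a
    omega
  obtain ⟨j, hj⟩ := List.length_eq_one_iff.mp hlen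
  refine ⟨j, ?_⟩
  show (g : Equiv.Perm (V d)) (a ++ [i]) = b ++ [j]
  rw [h, hj, show (g : Equiv.Perm (V d)) a = b from hab]

lemma ap_parent {g : AutT d} {v : V d} {i j : Fin d} (h : ap g (v ++ [i]) = v ++ [j]) :
    ap g v = v := by
  have h1 : ap g v <+: v ++ [j] := by
    have h2 : ap g v <+: ap g (v ++ [i]) := autT_prefix g (List.prefix_append v [i])
    rwa [h] at h2
  have h2 : v <+: v ++ [j] := List.prefix_append _ _
  rw [List.prefix_iff_eq_take] at h1 h2
  rw [ap_len] at h1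
  rw [h1, ← h2]

lemma ofFn_getElem {m : ℕ} (v : V d) (hv : v.length = m) :
    List.ofFn (fun k : Fin m => v.get (Fin.cast hv.symm k)) = v := by
  subst hv
  simp [List.ofFn_get]

lemma ofFn_snoc {n : ℕ} (v : Fin n → Fin d) (i : Fin d) :
    List.ofFn (Fin.snoc v i : Fin (n + 1) → Fin d) = List.ofFn v ++ [i] := by
  rw [List.ofFn_succ']
  simp [Fin.snoc_castSucc, Fin.snoc_last, List.concat_eq_append]

end Aux

section MeasAux

instance : DiscreteTopology (V d) := ⟨rfl⟩

instance (G : Subgroup (AutT d)) : BorelSpace ↥G := ⟨rfl⟩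

variable (G : Subgroup (AutT d))

/-- The set of elements of `G` sending the vertex `u` to the vertex `w`. -/
def Ev (u w : V d) : Set ↥G := {g : ↥G | ap (g : AutT d) u = w}

lemma mem_Ev {G : Subgroup (AutT d)} {u w : V d} {g : ↥G} : g ∈ Ev G u w ↔ ap (g : AutT d) u = w := Iff.rfl

lemma continuous_ap (u : V d) : Continuous fun g : ↥G => ap (g : AutT d) u := by
  have h1 : Continuous fun g : ↥G => ((g : AutT d) : Equiv.Perm (V d)) :=
    continuous_subtype_val.comp continuous_subtype_val
  have h2 : Continuous fun e : Equiv.Perm (V d) => (e : V d → V d) := continuous_induced_dom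
  exact (continuous_apply u).comp (h2.comp h1)

lemma measurableSet_Ev (u w : V d) : MeasurableSet (Ev G u w) :=
  ((isOpen_discrete ({w} : Set (V d))).preimage (continuous_ap G u)).measurableSet

lemma inducing_c : Topology.IsInducing fun g : ↥G => (((g : AutT d) : Equiv.Perm (V d)) : V d → V d) :=
  Topology.IsInducing.comp ⟨rfl⟩ (Topology.IsInducing.subtypeVal.comp Topology.IsInducing.subtypeVal)

lemma continuous_mulLeft (h : ↥G) : Continuous fun g : ↥G => h * g := by
  rw [(inducing_c G).continuous_iff]
  have he : ((fun g : ↥G => (((g : AutT d) : Equiv.Perm (V d)) : V d → V d)) ∘ fun g : ↥G => h * g)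
      = fun (g : ↥G) (v : V d) =>
        ((h : AutT d) : Equiv.Perm (V d)) (((g : AutT d) : Equiv.Perm (V d)) v) := rfl
  rw [he]
  exact continuous_pi fun v => continuous_of_discreteTopology.comp (continuous_ap G v)

lemma measure_preimage_mulLeft (μ : Measure ↥G) [μ.IsMulLeftInvariant] (h : ↥G)
    {A : Set ↥G} (hA : MeasurableSet A) : μ ((fun g : ↥G => h * g) ⁻¹' A) = μ A := by
  conv_rhs => rw [← MeasureTheory.Measure.IsMulLeftInvariant.map_mul_left_eq_self (μ := μ) h]
  rw [MeasureTheory.Measure.map_apply ((continuous_mulLeft G h).measurable) hA]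

end MeasAux

section XfixAux

variable (G : Subgroup (AutT d))

lemma xfix_eq_sum (n : ℕ) (g : ↥G) :
    (Xfix d n (g : AutT d) : ℝ) =
      ∑ w : Fin n → Fin d,
        (Ev G (List.ofFn w) (List.ofFn w)).indicator (fun _ => (1 : ℝ)) g := by
  classical
  rw [Xfix, Set.ncard_eq_toFinset_card', Set.toFinset_setOf, Finset.card_filter]
  push_cast
  refine Finset.sum_congr rfl fun w _ => ?_
  by_cases hw : ((g : AutT d) : Equiv.Perm (V d)) (List.ofFn w) = List.ofFn w
  · simp [hw, Set.indicator_apply, mem_Ev]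
  · simp [hw, Set.indicator_apply, mem_Ev]

lemma measurable_xfix (n : ℕ) :
    Measurable fun g : ↥G => (Xfix d n (g : AutT d) : ℝ) := by
  have he : (fun g : ↥G => (Xfix d n (g : AutT d) : ℝ))
      = fun g => ∑ w : Fin n → Fin d,
          (Ev G (List.ofFn w) (List.ofFn w)).indicator (fun _ => (1 : ℝ)) g :=
    funext fun g => xfix_eq_sum G n g
  rw [he]
  exact Finset.measurable_sum _ fun w _ =>
    measurable_const.indicator (measurableSet_Ev G _ _)

lemma integrable_xfix (μ : Measure ↥G) [IsFiniteMeasure μ] (n : ℕ) :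
    Integrable (fun g : ↥G => (Xfix d n (g : AutT d) : ℝ)) μ := by
  have he : (fun g : ↥G => (Xfix d n (g : AutT d) : ℝ))
      = fun g => ∑ w : Fin n → Fin d,
          (Ev G (List.ofFn w) (List.ofFn w)).indicator (fun _ => (1 : ℝ)) g :=
    funext fun g => xfix_eq_sum G n g
  rw [he]
  exact MeasureTheory.integrable_finset_sum _ fun w _ =>
    (MeasureTheory.integrable_const (1 : ℝ)).indicator (measurableSet_Ev G _ _)

lemma setIntegral_xfix (μ : Measure ↥G) [IsFiniteMeasure μ] {A : Set ↥G}
    (hA : MeasurableSet A) (n : ℕ) :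
    ∫ g in A, (Xfix d n ((g : ↥G) : AutT d) : ℝ) ∂μ
      = ∑ w : Fin n → Fin d, (μ (A ∩ Ev G (List.ofFn w) (List.ofFn w))).toReal := by
  rw [MeasureTheory.setIntegral_congr_fun hA (fun g _ => xfix_eq_sum G n g)]
  rw [MeasureTheory.integral_finset_sum _ fun w _ =>
    ((MeasureTheory.integrable_const (1 : ℝ)).indicator (measurableSet_Ev G _ _)).restrict]
  refine Finset.sum_congr rfl fun w _ => ?_
  rw [← MeasureTheory.integral_indicator hA, Set.indicator_indicator,
    MeasureTheory.integral_indicator_const _ (hA.inter (measurableSet_Ev G _ _)),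
    smul_eq_mul, mul_one]
  rfl

/-- The conditioning event `{X_1 = t 1, …, X_n = t n}`. -/
def At (n : ℕ) (t : ℕ → ℝ) : Set ↥G :=
  {g : ↥G | ∀ i, 1 ≤ i → i ≤ n → (Xfix d i (g : AutT d) : ℝ) = t i}

lemma measurableSet_At (n : ℕ) (t : ℕ → ℝ) : MeasurableSet (At G n t) := by
  rw [At, Set.setOf_forall]
  refine MeasurableSet.iInter fun i => ?_
  by_cases h1 : 1 ≤ i
  · by_cases h2 : i ≤ n
    · have he : {g : ↥G | 1 ≤ i → i ≤ n → (Xfix d i (g : AutT d) : ℝ) = t i}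
          = {g : ↥G | (Xfix d i (g : AutT d) : ℝ) = t i} := by
        ext g; simp [h1, h2]
      rw [he]
      exact measurable_xfix G i (measurableSet_singleton (t i))
    · have he : {g : ↥G | 1 ≤ i → i ≤ n → (Xfix d i (g : AutT d) : ℝ) = t i} = Set.univ := by
        ext g; simp [h2]
      rw [he]; exact MeasurableSet.univ
  · have he : {g : ↥G | 1 ≤ i → i ≤ n → (Xfix d i (g : AutT d) : ℝ) = t i} = Set.univ := by
      ext g; simp [h1]
    rw [he]; exact MeasurableSet.univ

end XfixAux

section StabAux

variable (G : Subgroup (AutT d))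

/-- The set of elements of `G` lying in the `m`-th level stabilizer. -/
def StabS (m : ℕ) : Set ↥G := {g : ↥G | (g : AutT d) ∈ levelStab d m}

lemma stabS_eq_iInter (m : ℕ) :
    StabS G m = ⋂ w : Fin m → Fin d, Ev G (List.ofFn w) (List.ofFn w) := by
  ext g
  simp only [Set.mem_iInter]
  constructor
  · intro hg w
    exact mem_Ev.mpr (mem_levelStab_iff.mp hg _ (by simp))
  · intro hg
    show (g : AutT d) ∈ levelStab d m
    rw [mem_levelStab_iff]
    intro v hv
    have hw := mem_Ev.mp (hg (fun k => v.get (Fin.cast hv.symm k)))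
    rwa [ofFn_getElem v hv] at hw

lemma measurableSet_stabS (m : ℕ) : MeasurableSet (StabS G m) := by
  rw [stabS_eq_iInter]
  exact MeasurableSet.iInter fun w => measurableSet_Ev G _ _

lemma stabS_inter_Ev {m : ℕ} {u : V d} (hu : u.length = m) :
    StabS G m ∩ Ev G u u = StabS G m :=
  Set.inter_eq_left.mpr fun g hg => mem_Ev.mpr (mem_levelStab_iff.mp hg u hu)

/-- Partition of the event `{g ∈ A, g v = v}` according to the image of the child `v·i`. -/
lemma measure_fix_eq_sum_children (μ : Measure ↥G) {A : Set ↥G} (hA : MeasurableSet A)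
    (v : V d) (i : Fin d) :
    μ (A ∩ Ev G v v) = ∑ j : Fin d, μ (A ∩ Ev G (v ++ [i]) (v ++ [j])) := by
  have hun : A ∩ Ev G v v = ⋃ j : Fin d, A ∩ Ev G (v ++ [i]) (v ++ [j]) := by
    ext g
    simp only [Set.mem_inter_iff, Set.mem_iUnion, mem_Ev]
    constructor
    · rintro ⟨hgA, hgv⟩
      obtain ⟨j, hj⟩ := ap_child' hgv i
      exact ⟨j, hgA, hj⟩
    · rintro ⟨j, hgA, hj⟩
      exact ⟨hgA, ap_parent hj⟩
  have hdisj : Pairwise (Function.onFun Disjoint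
      fun j : Fin d => A ∩ Ev G (v ++ [i]) (v ++ [j])) := by
    intro j k hjk
    simp only [Function.onFun]
    rw [Set.disjoint_left]
    rintro g ⟨-, hj⟩ ⟨-, hk⟩
    exact hjk (by simpa using List.append_cancel_left ((mem_Ev.mp hj).symm.trans (mem_Ev.mp hk)))
  rw [hun, MeasureTheory.measure_iUnion hdisj
    (fun j => hA.inter (measurableSet_Ev G _ _)), tsum_fintype]

/-- Multiplying by an element of the stabilizer of level `n` does not change `X_m`, `m ≤ n`. -/
lemma xfix_mulLeft (hd : 0 < d) {n m : ℕ} (hm : m ≤ n) {h : AutT d}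
    (hh : h ∈ levelStab d n) (g : AutT d) : Xfix d m (h * g) = Xfix d m g := by
  unfold Xfix
  congr 1
  ext w
  simp only [Set.mem_setOf_eq]
  have he : ((h * g : AutT d) : Equiv.Perm (V d)) (List.ofFn w)
      = (g : Equiv.Perm (V d)) (List.ofFn w) := by
    show (h : Equiv.Perm (V d)) ((g : Equiv.Perm (V d)) (List.ofFn w)) = _
    exact levelStab_fix hd hh (by rw [autT_len, List.length_ofFn]; omega)
  rw [he]

end StabAux

section ForwardAux

variable (G : Subgroup (AutT d))

lemma measure_At_inter_eq (μ : Measure ↥G) [μ.IsMulLeftInvariant] (hd : 0 < d)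
    {n : ℕ} (hn : 1 ≤ n) (t : ℕ → ℝ) (hST : StabLevelTrans d G)
    {v : V d} (hv : v.length = n) (i j k : Fin d) :
    μ (At G n t ∩ Ev G (v ++ [i]) (v ++ [j]))
      = μ (At G n t ∩ Ev G (v ++ [i]) (v ++ [k])) := by
  obtain ⟨h, hmem, hap⟩ := hST n hn v [j] [k] hv rfl
  rw [Subgroup.mem_inf] at hmem
  set H : ↥G := ⟨h, hmem.1⟩ with hH
  have hpre : (fun g : ↥G => H * g) ⁻¹' (At G n t ∩ Ev G (v ++ [i]) (v ++ [k]))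
      = At G n t ∩ Ev G (v ++ [i]) (v ++ [j]) := by
    ext g
    simp only [Set.mem_preimage, Set.mem_inter_iff]
    have hcoe : ((H * g : ↥G) : AutT d) = h * (g : AutT d) := rfl
    constructor
    · rintro ⟨h1, h2⟩
      refine ⟨fun m hm1 hm2 => ?_, ?_⟩
      · have := h1 m hm1 hm2
        rwa [hcoe, xfix_mulLeft hd hm2 hmem.2] at this
      · have h3 : ap h (ap (g : AutT d) (v ++ [i])) = v ++ [k] := by
          have := mem_Ev.mp h2
          rwa [hcoe, ap_mul] at this
        rw [mem_Ev]
        apply ap_injective h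
        rw [h3, ← hap]
    · rintro ⟨h1, h2⟩
      refine ⟨fun m hm1 hm2 => ?_, ?_⟩
      · rw [hcoe, xfix_mulLeft hd hm2 hmem.2]
        exact h1 m hm1 hm2
      · rw [mem_Ev, hcoe, ap_mul, mem_Ev.mp h2]
        exact hap
  rw [← hpre, measure_preimage_mulLeft G μ H
    ((measurableSet_At G n t).inter (measurableSet_Ev G _ _))]

lemma sum_children_eq (μ : Measure ↥G) [μ.IsMulLeftInvariant] (hd : 0 < d)
    {n : ℕ} (hn : 1 ≤ n) (t : ℕ → ℝ) (hST : StabLevelTrans d G)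
    {v : V d} (hv : v.length = n) :
    ∑ i : Fin d, μ (At G n t ∩ Ev G (v ++ [i]) (v ++ [i])) = μ (At G n t ∩ Ev G v v) := by
  have key : ∀ i : Fin d,
      (d : ENNReal) * μ (At G n t ∩ Ev G (v ++ [i]) (v ++ [i])) = μ (At G n t ∩ Ev G v v) := by
    intro i
    rw [measure_fix_eq_sum_children G μ (measurableSet_At G n t) v i,
      Finset.sum_congr rfl fun j _ => measure_At_inter_eq G μ hd hn t hST hv i j i]
    simp [Finset.sum_const, Finset.card_univ, nsmul_eq_mul]
  have hd0 : (d : ENNReal) ≠ 0 := by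
    simp only [ne_eq, Nat.cast_eq_zero]
    omega
  have hdt : (d : ENNReal) ≠ ⊤ := by simp
  refine (ENNReal.mul_right_inj hd0 hdt).mp ?_
  calc (d : ENNReal) * ∑ i : Fin d, μ (At G n t ∩ Ev G (v ++ [i]) (v ++ [i]))
      = ∑ i : Fin d, (d : ENNReal) * μ (At G n t ∩ Ev G (v ++ [i]) (v ++ [i])) :=
        Finset.mul_sum _ _ _
    _ = ∑ _i : Fin d, μ (At G n t ∩ Ev G v v) := Finset.sum_congr rfl fun i _ => key i
    _ = (d : ENNReal) * μ (At G n t ∩ Ev G v v) := by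
        simp [Finset.sum_const, Finset.card_univ, nsmul_eq_mul]

/-- The equivalence `(v, i) ↦ v·i` between pairs and level-`(n+1)` words. -/
def snocEquiv (n : ℕ) : (Fin n → Fin d) × Fin d ≃ (Fin (n + 1) → Fin d) where
  toFun p := Fin.snoc p.1 p.2
  invFun w := (fun k => w k.castSucc, w (Fin.last n))
  left_inv p := by
    refine Prod.ext ?_ ?_
    · funext k; simp [Fin.snoc_castSucc]
    · simp [Fin.snoc_last]
  right_inv w := Fin.snoc_init_self w

lemma sum_snoc {M : Type} [AddCommMonoid M] {n : ℕ} (F : (Fin (n + 1) → Fin d) → M) :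
    ∑ w : Fin (n + 1) → Fin d, F w = ∑ v : Fin n → Fin d, ∑ i : Fin d, F (Fin.snoc v i) := by
  calc ∑ w : Fin (n + 1) → Fin d, F w
      = ∑ p : (Fin n → Fin d) × Fin d, F (Fin.snoc p.1 p.2) :=
        (Fintype.sum_equiv (snocEquiv n) _ _ fun p => rfl).symm
    _ = ∑ v : Fin n → Fin d, ∑ i : Fin d, F (Fin.snoc v i) := Fintype.sum_prod_type _

lemma martingale_of_stabLevelTrans (μ : Measure ↥G) [IsProbabilityMeasure μ]
    [μ.IsMulLeftInvariant] (hd : 0 < d) (hST : StabLevelTrans d G) :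
    FPMartingale d G μ := by
  constructor
  · intro n _
    exact integrable_xfix G μ n
  · intro n hn t hA
    have e1 : {g : ↥G | ∀ i, 1 ≤ i → i ≤ n → (Xfix d i (g : AutT d) : ℝ) = t i}
        = At G n t := rfl
    rw [e1]
    have hAt : MeasurableSet (At G n t) := measurableSet_At G n t
    rw [setIntegral_xfix G μ hAt (n + 1),
      sum_snoc (fun w => (μ (At G n t ∩ Ev G (List.ofFn w) (List.ofFn w))).toReal)]
    have e2 : ∀ v : Fin n → Fin d,
        (∑ i : Fin d, (μ (At G n t ∩ Ev G (List.ofFn (Fin.snoc v i))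
            (List.ofFn (Fin.snoc v i)))).toReal)
        = (μ (At G n t ∩ Ev G (List.ofFn v) (List.ofFn v))).toReal := by
      intro v
      have e3 : ∀ i : Fin d, (μ (At G n t ∩ Ev G (List.ofFn (Fin.snoc v i))
          (List.ofFn (Fin.snoc v i)))).toReal
          = (μ (At G n t ∩ Ev G (List.ofFn v ++ [i]) (List.ofFn v ++ [i]))).toReal := by
        intro i; rw [ofFn_snoc]
      rw [Finset.sum_congr rfl fun i _ => e3 i,
        ← ENNReal.toReal_sum (fun i _ => measure_ne_top μ _),
        sum_children_eq G μ hd hn t hST (by simp)]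
    rw [Finset.sum_congr rfl fun v _ => e2 v, ← setIntegral_xfix G μ hAt n,
      MeasureTheory.setIntegral_congr_fun hAt (fun g hg => hg n hn le_rfl),
      MeasureTheory.setIntegral_const, smul_eq_mul, mul_comm]
    rfl

end ForwardAux

section ConverseAux

variable (G : Subgroup (AutT d))

lemma stabS_pos (μ : Measure ↥G) [IsProbabilityMeasure μ] [μ.IsMulLeftInvariant]
    (m : ℕ) : μ (StabS G m) ≠ 0 := by
  intro h0
  have hfin : Finite {l : V d // l.length = m} :=
    Finite.of_surjective (fun w : Fin m → Fin d => ⟨List.ofFn w, by simp⟩)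
      (fun l => ⟨fun k => l.1.get (Fin.cast l.2.symm k), Subtype.ext (ofFn_getElem l.1 l.2)⟩)
  set r : ↥G → ((Fin m → Fin d) → {l : V d // l.length = m}) :=
    fun g w => ⟨ap (g : AutT d) (List.ofFn w), by rw [ap_len]; simp⟩ with hr
  have hfib : ∀ y, μ (r ⁻¹' {y}) = 0 := by
    intro y
    rcases Set.eq_empty_or_nonempty (r ⁻¹' {y}) with he | ⟨g₁, hg₁⟩
    · simp [he]
    · have hset : r ⁻¹' {y} = (fun g : ↥G => g₁⁻¹ * g) ⁻¹' StabS G m := by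
        have hg₁' : r g₁ = y := hg₁
        ext g
        simp only [Set.mem_preimage, Set.mem_singleton_iff]
        have hcoe : ((g₁⁻¹ * g : ↥G) : AutT d) = (g₁ : AutT d)⁻¹ * (g : AutT d) := rfl
        constructor
        · intro hg
          show ((g₁⁻¹ * g : ↥G) : AutT d) ∈ levelStab d m
          rw [mem_levelStab_iff]
          intro v hv
          have h1 : ∀ w : Fin m → Fin d,
              ap (g : AutT d) (List.ofFn w) = ap (g₁ : AutT d) (List.ofFn w) := by
            intro w
            have := congrFun (hg.trans hg₁'.symm) w
            exact Subtype.ext_iff.mp this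
          have h2 : ap (g : AutT d) v = ap (g₁ : AutT d) v := by
            have := h1 (fun k => v.get (Fin.cast hv.symm k))
            rwa [ofFn_getElem v hv] at this
          show ap ((g₁⁻¹ * g : ↥G) : AutT d) v = v
          rw [hcoe, ap_mul, h2]
          exact ap_inv_ap _ _
        · intro hg
          have h2 : ∀ v : V d, v.length = m → ap (g : AutT d) v = ap (g₁ : AutT d) v := by
            intro v hv
            have h3 : ap ((g₁ : AutT d)⁻¹ * (g : AutT d)) v = v := by
              have := mem_levelStab_iff.mp hg v hv
              rwa [hcoe] at this
            rw [ap_mul] at h3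
            have := congrArg (ap (g₁ : AutT d)) h3
            rwa [ap_ap_inv] at this
          rw [← hg₁']
          funext w
          exact Subtype.ext (h2 (List.ofFn w) (by simp))
      rw [hset, measure_preimage_mulLeft G μ _ (measurableSet_stabS G m), h0]
  have hcon : (1 : ENNReal) ≤ 0 := by
    have hcover : (Set.univ : Set ↥G) = ⋃ y, r ⁻¹' {y} := by
      ext g; simp
    calc (1 : ENNReal) = μ Set.univ := (measure_univ).symm
      _ = μ (⋃ y, r ⁻¹' {y}) := by rw [← hcover]
      _ ≤ ∑' y, μ (r ⁻¹' {y}) := MeasureTheory.measure_iUnion_le _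
      _ = 0 := by simp [hfib]
  simp at hcon

lemma At_pow_eq_stabS (hd : 0 < d) {m : ℕ} (hm : 1 ≤ m) :
    At G m (fun i => (d : ℝ) ^ i) = StabS G m := by
  ext g
  constructor
  · intro hg
    have hXm : (Xfix d m (g : AutT d) : ℝ) = (d : ℝ) ^ m := hg m hm le_rfl
    have hXnat : Xfix d m (g : AutT d) = d ^ m := by
      exact_mod_cast hXm
    have hS : {w : Fin m → Fin d |
        ((g : AutT d) : Equiv.Perm (V d)) (List.ofFn w) = List.ofFn w} = Set.univ := by
      apply Set.eq_of_subset_of_ncard_le (Set.subset_univ _) ?_ Set.finite_univ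
      rw [Set.ncard_univ]
      have : Nat.card (Fin m → Fin d) = d ^ m := by simp
      rw [this, ← hXnat]
      rfl
    show (g : AutT d) ∈ levelStab d m
    rw [mem_levelStab_iff]
    intro v hv
    have hw : ((g : AutT d) : Equiv.Perm (V d))
        (List.ofFn (fun k => v.get (Fin.cast hv.symm k)))
        = List.ofFn (fun k => v.get (Fin.cast hv.symm k)) :=
      Set.eq_univ_iff_forall.mp hS (fun k => v.get (Fin.cast hv.symm k))
    rwa [ofFn_getElem v hv] at hw
  · intro hg
    intro i _ him
    have hS : {w : Fin i → Fin d |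
        ((g : AutT d) : Equiv.Perm (V d)) (List.ofFn w) = List.ofFn w} = Set.univ := by
      apply Set.eq_univ_iff_forall.mpr
      intro w
      exact levelStab_fix hd hg (by simp; omega)
    show ((Xfix d i (g : AutT d) : ℕ) : ℝ) = (d : ℝ) ^ i
    rw [Xfix, hS, Set.ncard_univ]
    simp

end ConverseAux

section FiberAux

variable (G : Subgroup (AutT d))

lemma stabS_coset_measure (μ : Measure ↥G) [μ.IsMulLeftInvariant] {m : ℕ}
    (u : V d) (i j : Fin d)
    (hne : (StabS G m ∩ Ev G (u ++ [i]) (u ++ [j])).Nonempty) :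
    μ (StabS G m ∩ Ev G (u ++ [i]) (u ++ [j]))
      = μ (StabS G m ∩ Ev G (u ++ [i]) (u ++ [i])) := by
  obtain ⟨h₀, hh₀S, hh₀E⟩ := hne
  have hh₀E' : ap (h₀ : AutT d) (u ++ [i]) = u ++ [j] := mem_Ev.mp hh₀E
  have hpre : (fun g : ↥G => h₀⁻¹ * g) ⁻¹' (StabS G m ∩ Ev G (u ++ [i]) (u ++ [i]))
      = StabS G m ∩ Ev G (u ++ [i]) (u ++ [j]) := by
    ext g
    simp only [Set.mem_preimage, Set.mem_inter_iff]
    have hcoe : ((h₀⁻¹ * g : ↥G) : AutT d) = (h₀ : AutT d)⁻¹ * (g : AutT d) := rfl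
    have hS : ((h₀⁻¹ * g : ↥G) ∈ StabS G m) ↔ g ∈ StabS G m := by
      constructor
      · intro hx
        have hg' : (h₀ : AutT d) * ((h₀⁻¹ * g : ↥G) : AutT d) = (g : AutT d) := by
          rw [hcoe]
          exact mul_inv_cancel_left _ _
        show (g : AutT d) ∈ levelStab d m
        rw [← hg']
        exact mul_mem hh₀S hx
      · intro hx
        show ((h₀⁻¹ * g : ↥G) : AutT d) ∈ levelStab d m
        rw [hcoe]
        exact mul_mem (inv_mem hh₀S) hx
    have hE : (h₀⁻¹ * g : ↥G) ∈ Ev G (u ++ [i]) (u ++ [i])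
        ↔ g ∈ Ev G (u ++ [i]) (u ++ [j]) := by
      rw [mem_Ev, mem_Ev, hcoe, ap_mul]
      constructor
      · intro hx
        have h1 := congrArg (ap (h₀ : AutT d)) hx
        rwa [ap_ap_inv, hh₀E'] at h1
      · intro hx
        rw [hx, ← hh₀E', ap_inv_ap]
    constructor
    · rintro ⟨h1, h2⟩
      exact ⟨hS.mp h1, hE.mp h2⟩
    · rintro ⟨h1, h2⟩
      exact ⟨hS.mpr h1, hE.mpr h2⟩
  rw [← hpre, measure_preimage_mulLeft G μ _
    ((measurableSet_stabS G m).inter (measurableSet_Ev G _ _))]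

lemma fiberTrans_of_martingale (μ : Measure ↥G) [IsProbabilityMeasure μ]
    [μ.IsMulLeftInvariant] (hd : 0 < d) (hM : FPMartingale d G μ) {m : ℕ} (hm : 1 ≤ m)
    {v : V d} (hv : v.length = m) (i j : Fin d) :
    ∃ h : AutT d, h ∈ G ∧ h ∈ levelStab d m ∧ ap h (v ++ [i]) = v ++ [j] := by
  classical
  have hSmeas := measurableSet_stabS G m
  have hS0 : μ (StabS G m) ≠ 0 := stabS_pos G μ m
  have hSfin : μ (StabS G m) ≠ ⊤ := measure_ne_top μ (StabS G m)
  have hc0 : 0 < (μ (StabS G m)).toReal := ENNReal.toReal_pos hS0 hSfin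
  have hdR : (0 : ℝ) < d := by exact_mod_cast hd
  -- partition of the stabilizer according to the image of a child
  have hpart : ∀ (u : V d), u.length = m → ∀ i' : Fin d,
      μ (StabS G m) = ∑ j' : Fin d, μ (StabS G m ∩ Ev G (u ++ [i']) (u ++ [j'])) := by
    intro u hu i'
    conv_lhs => rw [← stabS_inter_Ev G hu]
    exact measure_fix_eq_sum_children G μ hSmeas u i'
  have hle : ∀ (u : V d) (i' j' : Fin d),
      μ (StabS G m ∩ Ev G (u ++ [i']) (u ++ [j']))
        ≤ μ (StabS G m ∩ Ev G (u ++ [i']) (u ++ [i'])) := by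
    intro u i' j'
    rcases Set.eq_empty_or_nonempty (StabS G m ∩ Ev G (u ++ [i']) (u ++ [j']))
      with he | hne
    · simp [he]
    · exact le_of_eq (stabS_coset_measure G μ u i' j' hne)
  have hlow : ∀ (u : V d), u.length = m → ∀ i' : Fin d,
      (μ (StabS G m)).toReal / d
        ≤ (μ (StabS G m ∩ Ev G (u ++ [i']) (u ++ [i']))).toReal := by
    intro u hu i'
    have h1 : μ (StabS G m) ≤ (d : ENNReal) * μ (StabS G m ∩ Ev G (u ++ [i']) (u ++ [i'])) := by
      rw [hpart u hu i']
      calc ∑ j' : Fin d, μ (StabS G m ∩ Ev G (u ++ [i']) (u ++ [j']))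
          ≤ ∑ _j' : Fin d, μ (StabS G m ∩ Ev G (u ++ [i']) (u ++ [i'])) :=
            Finset.sum_le_sum fun j' _ => hle u i' j'
        _ = (d : ENNReal) * μ (StabS G m ∩ Ev G (u ++ [i']) (u ++ [i'])) := by
            simp [Finset.sum_const, Finset.card_univ, nsmul_eq_mul]
    have h2 : (μ (StabS G m)).toReal
        ≤ (d : ℝ) * (μ (StabS G m ∩ Ev G (u ++ [i']) (u ++ [i']))).toReal := by
      have h3 := ENNReal.toReal_mono
        (ENNReal.mul_ne_top (by simp) (measure_ne_top μ _)) h1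
      rwa [ENNReal.toReal_mul, ENNReal.toReal_natCast] at h3
    rw [div_le_iff₀ hdR]
    linarith
  -- the martingale identity at `St_G(m)`
  have hAeq : {g : ↥G | ∀ i, 1 ≤ i → i ≤ m →
      (Xfix d i (g : AutT d) : ℝ) = (fun k => (d : ℝ) ^ k) i} = StabS G m := by
    rw [show {g : ↥G | ∀ i, 1 ≤ i → i ≤ m →
      (Xfix d i (g : AutT d) : ℝ) = (fun k => (d : ℝ) ^ k) i}
        = At G m (fun k => (d : ℝ) ^ k) from rfl]
    exact At_pow_eq_stabS G hd hm
  have hMart := hM.2 m hm (fun k => (d : ℝ) ^ k) (by rw [hAeq]; exact hS0)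
  rw [hAeq] at hMart
  have hsum : ∑ p : (Fin m → Fin d) × Fin d,
      (μ (StabS G m ∩ Ev G (List.ofFn p.1 ++ [p.2]) (List.ofFn p.1 ++ [p.2]))).toReal
      = (d : ℝ) ^ m * (μ (StabS G m)).toReal := by
    have e1 : ∀ p : (Fin m → Fin d) × Fin d,
        (μ (StabS G m ∩ Ev G (List.ofFn (Fin.snoc p.1 p.2))
          (List.ofFn (Fin.snoc p.1 p.2)))).toReal
        = (μ (StabS G m ∩ Ev G (List.ofFn p.1 ++ [p.2]) (List.ofFn p.1 ++ [p.2]))).toReal := by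
      intro p
      rw [ofFn_snoc]
    calc ∑ p : (Fin m → Fin d) × Fin d,
        (μ (StabS G m ∩ Ev G (List.ofFn p.1 ++ [p.2]) (List.ofFn p.1 ++ [p.2]))).toReal
        = ∑ p : (Fin m → Fin d) × Fin d,
          (μ (StabS G m ∩ Ev G (List.ofFn (Fin.snoc p.1 p.2))
            (List.ofFn (Fin.snoc p.1 p.2)))).toReal :=
          Finset.sum_congr rfl fun p _ => (e1 p).symm
      _ = ∑ w : Fin (m + 1) → Fin d,
          (μ (StabS G m ∩ Ev G (List.ofFn w) (List.ofFn w))).toReal :=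
          Fintype.sum_equiv (snocEquiv m)
            (fun p => (μ (StabS G m ∩ Ev G (List.ofFn (Fin.snoc p.1 p.2))
              (List.ofFn (Fin.snoc p.1 p.2)))).toReal)
            (fun w => (μ (StabS G m ∩ Ev G (List.ofFn w) (List.ofFn w))).toReal)
            (fun p => rfl)
      _ = ∫ g in StabS G m, (Xfix d (m + 1) ((g : ↥G) : AutT d) : ℝ) ∂μ :=
          (setIntegral_xfix G μ hSmeas (m + 1)).symm
      _ = (d : ℝ) ^ m * (μ (StabS G m)).toReal := hMart
  -- forcing each summand to equal `μ(S)/d`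
  have hforce : ∀ p : (Fin m → Fin d) × Fin d,
      (μ (StabS G m ∩ Ev G (List.ofFn p.1 ++ [p.2]) (List.ofFn p.1 ++ [p.2]))).toReal
        = (μ (StabS G m)).toReal / d := by
    have hcard : (Fintype.card ((Fin m → Fin d) × Fin d)) = d ^ m * d := by simp
    have hsumc : ∑ _p : (Fin m → Fin d) × Fin d, (μ (StabS G m)).toReal / d
        = (d : ℝ) ^ m * (μ (StabS G m)).toReal := by
      rw [Finset.sum_const, Finset.card_univ, hcard, nsmul_eq_mul]
      push_cast
      field_simp
    have hmain := (Finset.sum_eq_sum_iff_of_le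
      (s := (Finset.univ : Finset ((Fin m → Fin d) × Fin d)))
      (g := fun p => (μ (StabS G m ∩ Ev G (List.ofFn p.1 ++ [p.2])
        (List.ofFn p.1 ++ [p.2]))).toReal)
      (f := fun _ => (μ (StabS G m)).toReal / d)
      (fun p _ => hlow (List.ofFn p.1) (by simp) p.2)).mp
      (by rw [hsumc, hsum])
    intro p
    exact (hmain p (Finset.mem_univ p)).symm
  -- conclude: the relevant piece is nonempty
  obtain ⟨wv, hwv⟩ : ∃ w : Fin m → Fin d, List.ofFn w = v :=
    ⟨fun k => v.get (Fin.cast hv.symm k), ofFn_getElem v hv⟩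
  have hstar : (μ (StabS G m ∩ Ev G (v ++ [i]) (v ++ [i]))).toReal
      = (μ (StabS G m)).toReal / d := by
    have := hforce (wv, i)
    rwa [hwv] at this
  have hne : (StabS G m ∩ Ev G (v ++ [i]) (v ++ [j])).Nonempty := by
    by_contra hcon
    rw [Set.not_nonempty_iff_eq_empty] at hcon
    have hsum2 : ∑ j' : Fin d, (μ (StabS G m ∩ Ev G (v ++ [i]) (v ++ [j']))).toReal
        = (μ (StabS G m)).toReal := by
      rw [← ENNReal.toReal_sum (fun _ _ => measure_ne_top μ _), ← hpart v hv i]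
    have hlt : ∑ j' : Fin d, (μ (StabS G m ∩ Ev G (v ++ [i]) (v ++ [j']))).toReal
        < ∑ _j' : Fin d, (μ (StabS G m)).toReal / d := by
      apply Finset.sum_lt_sum
      · intro j' _
        rcases Set.eq_empty_or_nonempty (StabS G m ∩ Ev G (v ++ [i]) (v ++ [j']))
          with he | hne'
        · rw [he]
          simp only [measure_empty, ENNReal.toReal_zero]
          positivity
        · rw [stabS_coset_measure G μ v i j' hne', hstar]
      · refine ⟨j, Finset.mem_univ j, ?_⟩
        rw [hcon]
        simp only [measure_empty, ENNReal.toReal_zero]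
        positivity
    have hconst : ∑ _j' : Fin d, (μ (StabS G m)).toReal / d
        = (μ (StabS G m)).toReal := by
      rw [Finset.sum_const, Finset.card_univ, Fintype.card_fin, nsmul_eq_mul]
      field_simp
    rw [hsum2, hconst] at hlt
    exact lt_irrefl _ hlt
  obtain ⟨g₀, hg₀S, hg₀E⟩ := hne
  exact ⟨(g₀ : AutT d), g₀.2, hg₀S, mem_Ev.mp hg₀E⟩

end FiberAux

section FinalAux

variable (G : Subgroup (AutT d))

lemma stabLevelTrans_of_fiberTrans (hd : 0 < d)
    (hFT : ∀ m : ℕ, 1 ≤ m → ∀ v : V d, v.length = m → ∀ i j : Fin d,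
      ∃ h : AutT d, h ∈ G ∧ h ∈ levelStab d m ∧ ap h (v ++ [i]) = v ++ [j]) :
    StabLevelTrans d G := by
  intro n hn v u w hv huw
  induction u using List.reverseRecOn generalizing w with
  | nil =>
    have hw : w = [] := List.eq_nil_of_length_eq_zero (by simpa using huw.symm)
    subst hw
    exact ⟨1, Subgroup.one_mem _, rfl⟩
  | append_singleton u' i ih =>
    rcases List.eq_nil_or_concat w with rfl | ⟨w', j, rfl⟩
    · simp at huw
    rw [List.concat_eq_append] at huw ⊢
    obtain ⟨g, hgmem, hgap⟩ := ih w' (by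
      rw [List.length_append, List.length_append] at huw
      simpa using huw)
    rw [Subgroup.mem_inf] at hgmem
    obtain ⟨i', hi'⟩ := ap_child' (a := v ++ u') (b := v ++ w') hgap i
    have hlen : (v ++ w').length = n + w'.length := by
      rw [List.length_append, hv]
    obtain ⟨h, hhG, hhStab, hhap⟩ :=
      hFT ((v ++ w').length) (by omega) (v ++ w') rfl i' j
    refine ⟨h * g, Subgroup.mem_inf.mpr
      ⟨mul_mem hhG hgmem.1,
        mul_mem (levelStab_mono hd (by omega) hhStab) hgmem.2⟩, ?_⟩
    show ap (h * g) (v ++ (u' ++ [i])) = v ++ (w' ++ [j])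
    rw [← List.append_assoc, ap_mul, hi', hhap, List.append_assoc]

end FinalAux

/-- Let `G ≤ Aut(T)` be a closed subgroup.  Then the fixed-point
process `{X_n}` of `G` (with respect to the Haar probability measure `μ_G`) is a
martingale if and only if for every `n ≥ 1` the level stabilizer `St_G(n)` acts
level-transitively on the subtrees rooted at level `n`. -/
theorem fixedPointProcess_martingale_iff_stabLevelTrans
    (d : ℕ) (hd : 2 ≤ d) (G : Subgroup (AutT d))
    (hclosed : IsClosed (G : Set (AutT d)))
    (μ : Measure ↥G) [IsProbabilityMeasure μ] [μ.IsMulLeftInvariant] :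
    FPMartingale d G μ ↔ StabLevelTrans d G := by
  have hd0 : 0 < d := by omega
  constructor
  · intro hM
    exact stabLevelTrans_of_fiberTrans G hd0
      (fun m hm v hv i j => fiberTrans_of_martingale G μ hd0 hM hm hv i j)
  · intro hST
    exact martingale_of_stabLevelTrans G μ hd0 hST

end ArbGal
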